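/- In the setting of the previous statement, suppose additionally there exist $\alpha > 0$, $\beta > 0$, $1 < q < \infty$, $h \in (0,1]$ and $Q : \mathbb{N} \to [0,\infty)$ such that (i) $\mathbb{P}[\tau \ge k] \le \alpha e^{-\beta k}$ for all $k \in \mathbb{N}$, (ii) $\|\sup_{t \in [k,k+1)} |X_t - \bar X_t|\|_{L^q} \le Q(k)\, h^{1/2}$ for all $k$, and (iii) $c := \sum_{k=0}^\infty e^{\beta(1/q - 1)k} Q(k) < \infty$. Then $\mathbb{E}\,|X_\vartheta - \bar X_\vartheta| \le \alpha^{1-1/q}\, c\, h^{1/2}$. -/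

import Mathlib

open MeasureTheory
open scoped ENNReal NNReal

lemma aux_bddAbove {F : ℝ → ℝ} (hF : Continuous F) (a b : ℝ) :
    BddAbove (Set.range fun t : ℝ => ⨆ _ : t ∈ Set.Ico a b, F t) := by
  obtain ⟨C, hC⟩ := (isCompact_Icc.image_of_continuousOn
    (hF.continuousOn (s := Set.Icc a b))).bddAbove
  refine ⟨max C 0, ?_⟩
  rintro x ⟨t, rfl⟩
  dsimp only
  by_cases ht : t ∈ Set.Ico a b
  · rw [ciSup_pos ht]
    exact le_max_of_le_left (hC (Set.mem_image_of_mem F ⟨ht.1, ht.2.le⟩))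
  · haveI : IsEmpty (t ∈ Set.Ico a b) := ⟨ht⟩
    rw [Real.iSup_of_isEmpty]
    exact le_max_right _ _

lemma aux_le_sup {F : ℝ → ℝ} (hF : Continuous F) {a b t : ℝ}
    (ht : t ∈ Set.Ico a b) : F t ≤ ⨆ s ∈ Set.Ico a b, F s := by
  have h1 : (⨆ _ : t ∈ Set.Ico a b, F t) ≤ ⨆ s ∈ Set.Ico a b, F s :=
    le_ciSup (aux_bddAbove hF a b) t
  rwa [ciSup_pos ht] at h1

lemma aux_sup_eq {F : ℝ → ℝ} (hF : Continuous F) (hF0 : ∀ t, 0 ≤ F t)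
    {a b : ℝ} (u : ℕ → Set.Ico a b) (hu : DenseRange u) :
    (⨆ t ∈ Set.Ico a b, F t) = ⨆ n, F (u n) := by
  have hbddu : BddAbove (Set.range fun n => F (u n)) := by
    obtain ⟨C, hC⟩ := (isCompact_Icc.image_of_continuousOn
      (hF.continuousOn (s := Set.Icc a b))).bddAbove
    refine ⟨C, ?_⟩
    rintro x ⟨n, rfl⟩
    exact hC (Set.mem_image_of_mem F ⟨(u n).2.1, (u n).2.2.le⟩)
  refine le_antisymm ?_ (ciSup_le fun n => aux_le_sup hF (u n).2)
  refine ciSup_le fun t => ?_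
  by_cases ht : t ∈ Set.Ico a b
  · rw [ciSup_pos ht]
    have htcl : (⟨t, ht⟩ : Set.Ico a b) ∈ closure (Set.range u) := by
      rw [hu.closure_range]; trivial
    obtain ⟨φ, hφmem, hφlim⟩ := mem_closure_iff_seq_limit.1 htcl
    have hval : Filter.Tendsto (fun k => (φ k : ℝ)) Filter.atTop (nhds t) :=
      (continuous_subtype_val.tendsto _).comp hφlim
    have hlim : Filter.Tendsto (fun k => F (φ k)) Filter.atTop (nhds (F t)) :=
      (hF.tendsto t).comp hval
    refine le_of_tendsto hlim (Filter.Eventually.of_forall fun k => ?_)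
    obtain ⟨n, hn⟩ := hφmem k
    rw [← hn]
    exact le_ciSup hbddu n
  · haveI : IsEmpty (t ∈ Set.Ico a b) := ⟨ht⟩
    rw [Real.iSup_of_isEmpty]
    exact le_ciSup_of_le hbddu 0 (hF0 _)

lemma aux_meas {Ω : Type*} {m0 : MeasurableSpace Ω} {F : ℝ → Ω → ℝ}
    (hFc : ∀ ω, Continuous fun t => F t ω) (hF0 : ∀ t ω, 0 ≤ F t ω)
    (hFm : ∀ t, Measurable (F t)) {a b : ℝ} (hab : a < b) :
    Measurable fun ω => ⨆ t ∈ Set.Ico a b, F t ω := by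
  haveI : Nonempty (Set.Ico a b) := ⟨⟨a, le_refl a, hab⟩⟩
  obtain ⟨u, hu⟩ := TopologicalSpace.exists_dense_seq (Set.Ico a b)
  have heq : (fun ω => ⨆ t ∈ Set.Ico a b, F t ω) = fun ω => ⨆ n, F (u n) ω :=
    funext fun ω => aux_sup_eq (hFc ω) (fun t => hF0 t ω) u hu
  rw [heq]
  exact Measurable.iSup fun n => hFm (u n)

/-- Lemma 3.2 (b) of the paper: under exponential tail decay of `τ` and blockwise
`L^q` bounds of order `h^(1/2)` on the error, the error at the stopping time `ϑ ≤ τ`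
is of order `h^(1/2)` in `L^1`. -/
theorem stmt6
    {Ω : Type*} {m0 : MeasurableSpace Ω} (μ : Measure Ω) [IsProbabilityMeasure μ]
    (ℱ : Filtration ℝ m0) {d : ℕ}
    (X Y : ℝ → Ω → EuclideanSpace ℝ (Fin d))
    (hXcont : ∀ ω, Continuous fun t => X t ω) (hYcont : ∀ ω, Continuous fun t => Y t ω)
    (hXadp : Adapted ℱ X) (hYadp : Adapted ℱ Y)
    (ϑ τ : Ω → ℝ) (hϑ : IsStoppingTime ℱ (fun ω => (ϑ ω : WithTop ℝ)))
    (hτ : IsStoppingTime ℱ (fun ω => (τ ω : WithTop ℝ)))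
    (hϑ0 : ∀ ω, 0 ≤ ϑ ω) (hϑτ : ∀ ω, ϑ ω ≤ τ ω)
    (q : ℝ) (hq : 1 < q)
    (α β h : ℝ) (hα : 0 < α) (hβ : 0 < β) (hh0 : 0 < h) (hh1 : h ≤ 1)
    (Q : ℕ → ℝ) (hQ0 : ∀ k, 0 ≤ Q k)
    (htail : ∀ k : ℕ, μ {ω | (k : ℝ) ≤ τ ω} ≤ ENNReal.ofReal (α * Real.exp (-β * k)))
    (hblock : ∀ k : ℕ,
      eLpNorm (fun ω => ⨆ t ∈ Set.Ico (k : ℝ) ((k : ℝ) + 1), ‖X t ω - Y t ω‖)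
          (ENNReal.ofReal q) μ
        ≤ ENNReal.ofReal (Q k * Real.sqrt h))
    (c : ℝ) (hc : HasSum (fun k : ℕ => Real.exp (β * (1 / q - 1) * k) * Q k) c) :
    ∫⁻ ω, (‖X (ϑ ω) ω - Y (ϑ ω) ω‖₊ : ENNReal) ∂μ
      ≤ ENNReal.ofReal (α ^ (1 - 1 / q) * c * Real.sqrt h) := by
  classical
  have hq0 : (0:ℝ) < q := lt_trans one_pos hq
  have hFc : ∀ ω, Continuous fun t => ‖X t ω - Y t ω‖ :=
    fun ω => ((hXcont ω).sub (hYcont ω)).norm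
  have hFm : ∀ t : ℝ, Measurable fun ω => ‖X t ω - Y t ω‖ :=
    fun t => (((hXadp t).mono (ℱ.le t) le_rfl).sub ((hYadp t).mono (ℱ.le t) le_rfl)).norm
  set g : ℕ → Ω → ℝ :=
    fun k ω => ⨆ t ∈ Set.Ico (k : ℝ) ((k : ℝ) + 1), ‖X t ω - Y t ω‖ with hgdef
  have hk1 : ∀ k : ℕ, (k : ℝ) < (k : ℝ) + 1 := fun k => lt_add_one _
  have hgmeas : ∀ k, Measurable (g k) := fun k =>
    aux_meas hFc (fun _ _ => norm_nonneg _) hFm (hk1 k)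
  have hg0 : ∀ k ω, 0 ≤ g k ω := fun k ω =>
    le_trans (norm_nonneg (X (k:ℝ) ω - Y (k:ℝ) ω))
      (aux_le_sup (hFc ω) ⟨le_refl _, hk1 k⟩)
  have hϑm : Measurable ϑ := hϑ.measurable'.untopD 0
  set A : ℕ → Set Ω := fun k => ϑ ⁻¹' Set.Ico (k : ℝ) ((k : ℝ) + 1) with hAdef
  have hAmeas : ∀ k, MeasurableSet (A k) := fun k => hϑm measurableSet_Ico
  -- pointwise bound
  have hpt : ∀ ω, (‖X (ϑ ω) ω - Y (ϑ ω) ω‖₊ : ℝ≥0∞)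
      ≤ ∑' k, (A k).indicator (fun ω' => ENNReal.ofReal (g k ω')) ω := by
    intro ω
    have hmem : ϑ ω ∈ Set.Ico ((⌊ϑ ω⌋₊ : ℕ) : ℝ) (((⌊ϑ ω⌋₊ : ℕ) : ℝ) + 1) :=
      ⟨Nat.floor_le (hϑ0 ω), Nat.lt_floor_add_one _⟩
    calc (‖X (ϑ ω) ω - Y (ϑ ω) ω‖₊ : ℝ≥0∞)
        = ENNReal.ofReal ‖X (ϑ ω) ω - Y (ϑ ω) ω‖ := (ofReal_norm _).symm
      _ ≤ ENNReal.ofReal (g ⌊ϑ ω⌋₊ ω) :=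
          ENNReal.ofReal_le_ofReal (aux_le_sup (hFc ω) hmem)
      _ = (A ⌊ϑ ω⌋₊).indicator (fun ω' => ENNReal.ofReal (g ⌊ϑ ω⌋₊ ω')) ω :=
          (Set.indicator_of_mem (show ω ∈ A ⌊ϑ ω⌋₊ from hmem)
            (fun ω' => ENNReal.ofReal (g ⌊ϑ ω⌋₊ ω'))).symm
      _ ≤ ∑' k, (A k).indicator (fun ω' => ENNReal.ofReal (g k ω')) ω :=
          ENNReal.le_tsum _
  have hmain : ∫⁻ ω, (‖X (ϑ ω) ω - Y (ϑ ω) ω‖₊ : ℝ≥0∞) ∂μ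
      ≤ ∑' k, ∫⁻ ω, (A k).indicator (fun ω' => ENNReal.ofReal (g k ω')) ω ∂μ := by
    refine le_trans (lintegral_mono hpt) (le_of_eq ?_)
    exact lintegral_tsum fun k =>
      ((hgmeas k).ennreal_ofReal.indicator (hAmeas k)).aemeasurable
  -- conjugate exponent
  have hpq : q.HolderConjugate q.conjExponent := Real.HolderConjugate.conjExponent hq
  have hinv : 1 / q.conjExponent = 1 - 1 / q := by
    have := hpq.inv_add_inv_eq_one
    rw [one_div, one_div]
    linarith
  have hexp0 : (0:ℝ) ≤ 1 - 1/q := by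
    rw [← hinv]; exact le_of_lt (one_div_pos.mpr hpq.symm.pos)
  -- blockwise bound
  have hterm : ∀ k : ℕ, ∫⁻ ω, (A k).indicator (fun ω' => ENNReal.ofReal (g k ω')) ω ∂μ
      ≤ ENNReal.ofReal (Q k * Real.sqrt h)
        * ENNReal.ofReal (α ^ (1 - 1/q) * Real.exp (β * (1/q - 1) * k)) := by
    intro k
    have hind : ∀ ω, (A k).indicator (fun ω' => ENNReal.ofReal (g k ω')) ω
        = ENNReal.ofReal (g k ω) * (A k).indicator (1 : Ω → ℝ≥0∞) ω := by
      intro ω; by_cases hω : ω ∈ A k <;> simp [hω]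
    have hH := ENNReal.lintegral_mul_le_Lp_mul_Lq μ hpq
      (hgmeas k).ennreal_ofReal.aemeasurable
      ((measurable_one.indicator (hAmeas k)).aemeasurable)
    simp only [Pi.mul_apply] at hH
    have h2 : (∫⁻ ω, ((A k).indicator (1 : Ω → ℝ≥0∞) ω) ^ q.conjExponent ∂μ) = μ (A k) := by
      have haux : ∀ ω, ((A k).indicator (1 : Ω → ℝ≥0∞) ω) ^ q.conjExponent
          = (A k).indicator (1 : Ω → ℝ≥0∞) ω := by
        intro ω; by_cases hω : ω ∈ A k <;>
          simp [hω, ENNReal.zero_rpow_of_pos hpq.symm.pos]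
      simp_rw [haux]
      rw [lintegral_indicator_one (hAmeas k)]
    have h1 : (∫⁻ ω, (ENNReal.ofReal (g k ω)) ^ q ∂μ) ^ (1/q)
        ≤ ENNReal.ofReal (Q k * Real.sqrt h) := by
      have he : eLpNorm (g k) (ENNReal.ofReal q) μ
          = (∫⁻ ω, (ENNReal.ofReal (g k ω)) ^ q ∂μ) ^ (1/q) := by
        rw [eLpNorm_eq_lintegral_rpow_enorm_toReal
          (by simp [hq0, not_le.mpr hq0, le_of_lt hq0, ENNReal.ofReal_eq_zero, not_le]
            : ENNReal.ofReal q ≠ 0)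
          ENNReal.ofReal_ne_top]
        rw [ENNReal.toReal_ofReal (le_of_lt hq0)]
        congr 1
        refine lintegral_congr fun ω => ?_
        rw [Real.enorm_eq_ofReal (hg0 k ω)]
      rw [← he]
      exact hblock k
    have h3 : μ (A k) ≤ ENNReal.ofReal (α * Real.exp (-β * k)) := by
      refine le_trans (measure_mono ?_) (htail k)
      intro ω hω
      exact le_trans hω.1 (hϑτ ω)
    have h4 : μ (A k) ^ (1/q.conjExponent)
        ≤ ENNReal.ofReal (α ^ (1 - 1/q) * Real.exp (β * (1/q - 1) * k)) := by
      calc μ (A k) ^ (1/q.conjExponent)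
          ≤ (ENNReal.ofReal (α * Real.exp (-β * k))) ^ (1/q.conjExponent) :=
            ENNReal.rpow_le_rpow h3 (le_of_lt (one_div_pos.mpr hpq.symm.pos))
        _ = ENNReal.ofReal ((α * Real.exp (-β * k)) ^ (1/q.conjExponent)) := by
            rw [← ENNReal.ofReal_rpow_of_nonneg (by positivity)
              (le_of_lt (one_div_pos.mpr hpq.symm.pos))]
        _ = ENNReal.ofReal (α ^ (1 - 1/q) * Real.exp (β * (1/q - 1) * k)) := by
            rw [Real.mul_rpow (le_of_lt hα) (Real.exp_nonneg _), ← Real.exp_mul, hinv]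
            congr 2
            ring
    calc ∫⁻ ω, (A k).indicator (fun ω' => ENNReal.ofReal (g k ω')) ω ∂μ
        = ∫⁻ ω, ENNReal.ofReal (g k ω) * (A k).indicator (1 : Ω → ℝ≥0∞) ω ∂μ := by
          simp_rw [hind]
      _ ≤ (∫⁻ ω, (ENNReal.ofReal (g k ω)) ^ q ∂μ) ^ (1/q)
            * (∫⁻ ω, ((A k).indicator (1 : Ω → ℝ≥0∞) ω) ^ q.conjExponent ∂μ)
              ^ (1/q.conjExponent) := hH
      _ = (∫⁻ ω, (ENNReal.ofReal (g k ω)) ^ q ∂μ) ^ (1/q)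
            * μ (A k) ^ (1/q.conjExponent) := by rw [h2]
      _ ≤ ENNReal.ofReal (Q k * Real.sqrt h)
            * ENNReal.ofReal (α ^ (1 - 1/q) * Real.exp (β * (1/q - 1) * k)) :=
          mul_le_mul' h1 h4
  -- sum up
  have hsummable : Summable (fun k : ℕ => Real.exp (β * (1 / q - 1) * k) * Q k) := hc.summable
  calc ∫⁻ ω, (‖X (ϑ ω) ω - Y (ϑ ω) ω‖₊ : ℝ≥0∞) ∂μ
      ≤ ∑' k, ∫⁻ ω, (A k).indicator (fun ω' => ENNReal.ofReal (g k ω')) ω ∂μ := hmain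
    _ ≤ ∑' k, ENNReal.ofReal (Q k * Real.sqrt h)
          * ENNReal.ofReal (α ^ (1 - 1/q) * Real.exp (β * (1/q - 1) * k)) :=
        ENNReal.tsum_le_tsum hterm
    _ = ∑' k : ℕ, ENNReal.ofReal ((α ^ (1 - 1/q) * Real.sqrt h)
          * (Real.exp (β * (1/q - 1) * (k:ℝ)) * Q k)) := by
        refine tsum_congr fun k => ?_
        rw [← ENNReal.ofReal_mul (mul_nonneg (hQ0 k) (Real.sqrt_nonneg h))]
        congr 1
        ring
    _ = ENNReal.ofReal ((α ^ (1 - 1/q) * Real.sqrt h) * c) := by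
        rw [← ENNReal.ofReal_tsum_of_nonneg
          (fun k => mul_nonneg (by positivity)
            (mul_nonneg (Real.exp_nonneg _) (hQ0 k))) (hsummable.mul_left _)]
        congr 1
        rw [tsum_mul_left, hc.tsum_eq]
    _ = ENNReal.ofReal (α ^ (1 - 1 / q) * c * Real.sqrt h) := by
        congr 1
        ring
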